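/- Let d ≥ 2 and let Ω : ℝ^d → ℝ be differentiable. Then Ω satisfies Ω(w + p) ≥ Ω(w) for all orthogonal w, p ∈ ℝ^d if and only if Ω(w) = h(⟨w, w⟩) for some nondecreasing h : ℝ≥0 → ℝ. -/

import Mathlib

open Real

lemma aux_exists_perp {d : ℕ} (hd : 2 ≤ d) (u : EuclideanSpace ℝ (Fin d)) :
    ∃ e : EuclideanSpace ℝ (Fin d), ‖e‖ = 1 ∧ inner ℝ u e = (0:ℝ) := by
  by_cases hu : u = 0
  · refine ⟨EuclideanSpace.single ⟨0, by omega⟩ 1, by simp [EuclideanSpace.norm_single], by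
      simp [hu]⟩
  · have hne : (Submodule.span ℝ {u})ᗮ ≠ ⊥ := by
      intro h
      have h1 := Submodule.finrank_add_finrank_orthogonal (K := Submodule.span ℝ {u})
      rw [h, finrank_span_singleton hu] at h1
      simp [finrank_euclideanSpace_fin] at h1
      omega
    obtain ⟨v, hv, hv0⟩ := Submodule.exists_mem_ne_zero_of_ne_bot hne
    have hvu : inner ℝ u v = (0:ℝ) :=
      (Submodule.mem_orthogonal _ v).1 hv u (Submodule.mem_span_singleton_self u)
    refine ⟨‖v‖⁻¹ • v, ?_, ?_⟩
    · rw [norm_smul]; simp [norm_ne_zero_iff.2 hv0]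
    · rw [inner_smul_right, hvu]; simp

lemma aux_fderiv_perp {d : ℕ} (Ω : EuclideanSpace ℝ (Fin d) → ℝ)
    (hdiff : Differentiable ℝ Ω)
    (hmin : ∀ w p : EuclideanSpace ℝ (Fin d), inner ℝ w p = (0:ℝ) → Ω w ≤ Ω (w + p))
    (x p : EuclideanSpace ℝ (Fin d)) (hxp : inner ℝ x p = (0:ℝ)) :
    fderiv ℝ Ω x p = 0 := by
  have hline : HasDerivAt (fun t : ℝ => Ω (x + t • p)) (fderiv ℝ Ω x p) 0 := by
    have h1 : HasDerivAt (fun t : ℝ => x + t • p) p 0 := by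
      simpa using ((hasDerivAt_id (0:ℝ)).smul_const p).const_add x
    have h2 := (hdiff (x + (0:ℝ) • p)).hasFDerivAt.comp_hasDerivAt 0 h1
    simpa [Function.comp_def] using h2
  have hloc : IsLocalMin (fun t : ℝ => Ω (x + t • p)) 0 := by
    apply Filter.Eventually.of_forall
    intro t
    have : inner ℝ x (t • p) = (0:ℝ) := by rw [inner_smul_right, hxp]; simp
    simpa using hmin x (t • p) this
  exact hloc.hasDerivAt_eq_zero hline

lemma aux_sphere_const {d : ℕ} (hd : 2 ≤ d) (Ω : EuclideanSpace ℝ (Fin d) → ℝ)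
    (hdiff : Differentiable ℝ Ω)
    (hmin : ∀ w p : EuclideanSpace ℝ (Fin d), inner ℝ w p = (0:ℝ) → Ω w ≤ Ω (w + p))
    (u v : EuclideanSpace ℝ (Fin d)) (huv : ‖u‖ = ‖v‖) : Ω u = Ω v := by
  by_cases hu : u = 0
  · have : v = 0 := by rw [← norm_eq_zero, ← huv, hu, norm_zero]
    rw [hu, this]
  have hr : (0:ℝ) < ‖u‖ := norm_pos_iff.2 hu
  obtain ⟨c, hcdef⟩ : ∃ c : ℝ, c = (inner ℝ u v : ℝ) / ‖u‖ ^ 2 := ⟨_, rfl⟩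
  obtain ⟨w, hwdef⟩ : ∃ w : EuclideanSpace ℝ (Fin d), w = v - c • u := ⟨_, rfl⟩
  have hiuv : (inner ℝ u v : ℝ) = c * ‖u‖ ^ 2 := by rw [hcdef]; field_simp
  have huw : inner ℝ u w = (0:ℝ) := by
    rw [hwdef, inner_sub_right, real_inner_smul_right, real_inner_self_eq_norm_sq, hiuv]
    ring
  have hwnorm : ‖w‖ ^ 2 = ‖u‖ ^ 2 - c ^ 2 * ‖u‖ ^ 2 := by
    have h1 : ‖w‖ ^ 2 = (inner ℝ w w : ℝ) := (real_inner_self_eq_norm_sq w).symm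
    have h2 : (inner ℝ w w : ℝ) =
        (inner ℝ v v : ℝ) - 2 * (c * inner ℝ u v) + c ^ 2 * inner ℝ u u := by
      simp only [hwdef, inner_sub_left, inner_sub_right, real_inner_smul_left,
        real_inner_smul_right, real_inner_comm v u]
      ring
    rw [h1, h2, hiuv, real_inner_self_eq_norm_sq, real_inner_self_eq_norm_sq, ← huv]
    ring
  have hc2 : c ^ 2 ≤ 1 := by nlinarith [sq_nonneg ‖w‖, mul_pos hr hr]
  have hc1 : -1 ≤ c := by nlinarith [sq_nonneg (c + 1)]
  have hc1' : c ≤ 1 := by nlinarith [sq_nonneg (c - 1)]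
  obtain ⟨e, hener, hue, Δ, hvΔ⟩ : ∃ e : EuclideanSpace ℝ (Fin d), ‖e‖ = ‖u‖ ∧
      inner ℝ u e = (0:ℝ) ∧ ∃ Δ : ℝ, v = Real.cos Δ • u + Real.sin Δ • e := by
    by_cases hw0 : w = 0
    · obtain ⟨e0, he0n, he0⟩ := aux_exists_perp hd u
      have hsin : Real.sin (Real.arccos c) = 0 := by
        rw [Real.sin_arccos]
        have h4 : ‖w‖ ^ 2 = 0 := by rw [hw0]; simp
        have h5 : 1 - c ^ 2 = 0 := by nlinarith [mul_pos hr hr]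
        rw [h5, Real.sqrt_zero]
      have hv : v = c • u := by
        have h3 : v - c • u = 0 := by rw [← hwdef, hw0]
        exact sub_eq_zero.mp h3
      refine ⟨‖u‖ • e0, by rw [norm_smul, he0n]; simp [abs_of_pos hr], by
        rw [inner_smul_right, he0]; simp, Real.arccos c, ?_⟩
      rw [Real.cos_arccos hc1 hc1', hsin, hv]; simp
    · have hwne : ‖w‖ ≠ 0 := norm_ne_zero_iff.2 hw0
      refine ⟨(‖u‖ / ‖w‖) • w, ?_, by rw [inner_smul_right, huw]; simp,
        Real.arccos c, ?_⟩
      · rw [norm_smul]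
        rw [norm_div, norm_norm, norm_norm]; field_simp
      · have hsin : Real.sin (Real.arccos c) = ‖w‖ / ‖u‖ := by
          rw [Real.sin_arccos]
          have h1 : 1 - c ^ 2 = (‖w‖ / ‖u‖) ^ 2 := by field_simp; nlinarith
          rw [h1, Real.sqrt_sq (by positivity)]
        rw [Real.cos_arccos hc1 hc1', hsin, smul_smul]
        have h6 : ‖w‖ / ‖u‖ * (‖u‖ / ‖w‖) = 1 := by field_simp
        rw [h6, one_smul, hwdef]; abel
  have hγd : ∀ t : ℝ, HasDerivAt (fun t : ℝ => Real.cos t • u + Real.sin t • e)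
      ((-Real.sin t) • u + Real.cos t • e) t := fun t =>
    ((Real.hasDerivAt_cos t).smul_const u).add ((Real.hasDerivAt_sin t).smul_const e)
  have hperp : ∀ t : ℝ, inner ℝ (Real.cos t • u + Real.sin t • e)
      ((-Real.sin t) • u + Real.cos t • e) = (0:ℝ) := by
    intro t
    have h2 : (inner ℝ u u : ℝ) = ‖u‖ ^ 2 := real_inner_self_eq_norm_sq u
    have h3 : (inner ℝ e e : ℝ) = ‖u‖ ^ 2 := by rw [real_inner_self_eq_norm_sq, hener]
    have h4 : (inner ℝ e u : ℝ) = 0 := by rw [real_inner_comm]; exact hue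
    have h5 : (inner ℝ u e : ℝ) = 0 := hue
    simp only [inner_add_left, inner_add_right, real_inner_smul_left,
      real_inner_smul_right, h2, h3, h4, h5]
    ring
  have hφd : ∀ t : ℝ, HasDerivAt (fun t : ℝ => Ω (Real.cos t • u + Real.sin t • e)) 0 t := by
    intro t
    have h2 := (hdiff (Real.cos t • u + Real.sin t • e)).hasFDerivAt.comp_hasDerivAt t (hγd t)
    rwa [aux_fderiv_perp Ω hdiff hmin _ _ (hperp t)] at h2
  have hconst := is_const_of_deriv_eq_zero (𝕜 := ℝ)
    (f := fun t : ℝ => Ω (Real.cos t • u + Real.sin t • e))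
    (fun t => (hφd t).differentiableAt) (fun t => (hφd t).deriv) 0 Δ
  rw [Real.cos_zero, Real.sin_zero, one_smul, zero_smul, add_zero] at hconst
  rw [hconst, ← hvΔ]

theorem stmt_7 {d : ℕ} (hd : 2 ≤ d) (Ω : EuclideanSpace ℝ (Fin d) → ℝ)
    (hdiff : Differentiable ℝ Ω) :
    (∀ w p : EuclideanSpace ℝ (Fin d), inner ℝ w p = (0 : ℝ) → Ω w ≤ Ω (w + p)) ↔
      ∃ h : NNReal → ℝ, Monotone h ∧
        ∀ w : EuclideanSpace ℝ (Fin d), Ω w = h ⟨inner ℝ w w, real_inner_self_nonneg⟩ := by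
  constructor
  · intro hmin
    set i0 : Fin d := ⟨0, by omega⟩ with hi0
    set i1 : Fin d := ⟨1, by omega⟩ with hi1
    set e0 : EuclideanSpace ℝ (Fin d) := EuclideanSpace.single i0 1 with he0
    set e1 : EuclideanSpace ℝ (Fin d) := EuclideanSpace.single i1 1 with he1
    have hne : i0 ≠ i1 := by simp [hi0, hi1, Fin.ext_iff]
    have he01 : inner ℝ e0 e1 = (0:ℝ) := by
      rw [he0, he1, EuclideanSpace.inner_single_left]
      simp [EuclideanSpace.single_apply, hne]
    have hn0 : ‖e0‖ = 1 := by simp [he0, EuclideanSpace.norm_single]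
    have hnorm : ∀ s : ℝ, 0 ≤ s → ‖Real.sqrt s • e0‖ = Real.sqrt s := by
      intro s hs
      rw [norm_smul, hn0, mul_one, Real.norm_eq_abs, abs_of_nonneg (Real.sqrt_nonneg s)]
    refine ⟨fun s => Ω (Real.sqrt (s:ℝ) • e0), ?_, ?_⟩
    · intro s t hst
      set x : EuclideanSpace ℝ (Fin d) := Real.sqrt (s:ℝ) • e0 with hx
      set p : EuclideanSpace ℝ (Fin d) := Real.sqrt ((t:ℝ) - s) • e1 with hp
      have hxp : inner ℝ x p = (0:ℝ) := by
        rw [hx, hp, inner_smul_left, inner_smul_right, he01]; simp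
      have h1 : Ω x ≤ Ω (x + p) := hmin x p hxp
      have h2 : Ω (x + p) = Ω (Real.sqrt (t:ℝ) • e0) := by
        apply aux_sphere_const hd Ω hdiff hmin
        have hts : (0:ℝ) ≤ (t:ℝ) - s := by
          have := NNReal.coe_le_coe.2 hst; linarith
        have hxpn : ‖x + p‖ ^ 2 = (t:ℝ) := by
          rw [norm_add_sq_real, hxp]
          rw [hx, hp, norm_smul, norm_smul, hn0]
          simp only [norm_one, mul_one, Real.norm_eq_abs,
            abs_of_nonneg (Real.sqrt_nonneg _)]
          rw [EuclideanSpace.norm_single]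
          rw [Real.sq_sqrt (by positivity : (0:ℝ) ≤ (s:ℝ))]
          simp [Real.sq_sqrt hts, mul_pow, Real.sq_sqrt]
        have h3 : ‖x + p‖ = Real.sqrt (t:ℝ) := by
          rw [← hxpn, Real.sqrt_sq (norm_nonneg _)]
        rw [h3]; exact (hnorm _ t.coe_nonneg).symm
      rw [h2] at h1; exact h1
    · intro w
      apply aux_sphere_const hd Ω hdiff hmin
      have h7 : ‖Real.sqrt ((inner ℝ w w : ℝ)) • e0‖ = ‖w‖ := by
        rw [hnorm _ real_inner_self_nonneg, real_inner_self_eq_norm_sq,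
          Real.sqrt_sq (norm_nonneg w)]
      exact h7.symm
  · rintro ⟨h, hmono, hval⟩ w p hwp
    rw [hval w, hval (w + p)]
    apply hmono
    refine NNReal.coe_le_coe.1 ?_
    show inner ℝ w w ≤ inner ℝ (w + p) (w + p)
    have : inner ℝ (w + p) (w + p) = inner ℝ w w + inner ℝ p p + 2 * (inner ℝ w p : ℝ) := by
      rw [inner_add_left, inner_add_right, inner_add_right, real_inner_comm p w]; ring
    rw [this, hwp]
    have : (0:ℝ) ≤ inner ℝ p p := real_inner_self_nonneg
    linarith
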